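/- Let V and W be closed subspaces of a Hilbert space F such that P_V - P_W is a compact operator. Then both dim(V ∩ W⊥) and dim(V⊥ ∩ W) are finite, so the relative dimension dim(V,W) = dim(V ∩ W⊥) - dim(V⊥ ∩ W) is a well-defined integer. -/

import Mathlib

lemma aux_findim {F : Type*} [NormedAddCommGroup F] [NormedSpace ℝ F]
    (T : F →L[ℝ] F) (hT : IsCompactOperator T) (S : Submodule ℝ F)
    (hS : IsClosed (S : Set F)) (hid : ∀ x ∈ S, T x = x) :
    FiniteDimensional ℝ S := by
  obtain ⟨K, hK, hTK⟩ := IsCompactOperator.image_closedBall_subset_compact (f := (T : F →ₗ[ℝ] F)) hT 1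
  have hball : IsCompact (Metric.closedBall (0 : S) 1) := by
    rw [Topology.IsEmbedding.isCompact_iff (Topology.IsEmbedding.subtypeVal)]
    have himg : (Subtype.val '' Metric.closedBall (0 : S) 1)
        = Metric.closedBall (0 : F) 1 ∩ (S : Set F) := by
      ext x
      simp only [Set.mem_image, Metric.mem_closedBall, Set.mem_inter_iff, SetLike.mem_coe]
      constructor
      · rintro ⟨y, hy, rfl⟩
        exact ⟨by simpa [dist_eq_norm] using hy, y.2⟩
      · rintro ⟨hx, hxS⟩
        exact ⟨⟨x, hxS⟩, by simpa [dist_eq_norm] using hx, rfl⟩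
    rw [himg]
    refine hK.of_isClosed_subset (Metric.isClosed_closedBall.inter hS) ?_
    rintro x ⟨hx, hxS⟩
    have : T x = x := hid x hxS
    exact hTK ⟨x, by simpa using hx, this⟩
  exact FiniteDimensional.of_isCompact_closedBall₀ ℝ zero_lt_one hball

/-- If `P_V - P_W` is compact, then `V ∩ W⊥` and `V⊥ ∩ W` are finite dimensional,
so the relative dimension `dim(V,W) = dim(V ∩ W⊥) - dim(V⊥ ∩ W)` is a well-defined integer. -/
theorem stmt_1 {F : Type*} [NormedAddCommGroup F] [InnerProductSpace ℝ F] [CompleteSpace F]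
    (V W : Submodule ℝ F) [CompleteSpace V] [CompleteSpace W]
    (h : IsCompactOperator
      ((V.subtypeL.comp (Submodule.orthogonalProjectionOnto V)) - (W.subtypeL.comp (Submodule.orthogonalProjectionOnto W)))) :
    FiniteDimensional ℝ (V ⊓ Wᗮ : Submodule ℝ F) ∧
    FiniteDimensional ℝ (Vᗮ ⊓ W : Submodule ℝ F) := by
  set T := (V.subtypeL.comp (Submodule.orthogonalProjectionOnto V)) - (W.subtypeL.comp (Submodule.orthogonalProjectionOnto W))
    with hTdef
  have hVclosed : IsClosed (V : Set F) := (completeSpace_coe_iff_isComplete.mp ‹CompleteSpace V›).isClosed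
  have hWclosed : IsClosed (W : Set F) := (completeSpace_coe_iff_isComplete.mp ‹CompleteSpace W›).isClosed
  constructor
  · refine aux_findim T h (V ⊓ Wᗮ) (hVclosed.inter W.isClosed_orthogonal) ?_
    rintro x ⟨hxV, hxW⟩
    simp only [hTdef, ContinuousLinearMap.sub_apply, ContinuousLinearMap.comp_apply,
      Submodule.subtypeL_apply]
    rw [show V.orthogonalProjectionOnto x = ⟨x, hxV⟩ from Submodule.orthogonalProjectionOnto_mem_subspace_eq_self ⟨x, hxV⟩,
      Submodule.orthogonalProjectionOnto_apply_of_mem_orthogonal hxW]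
    simp
  · refine aux_findim (-T) h.neg (Vᗮ ⊓ W) (V.isClosed_orthogonal.inter hWclosed) ?_
    rintro x ⟨hxV, hxW⟩
    simp only [hTdef, ContinuousLinearMap.neg_apply, ContinuousLinearMap.sub_apply,
      ContinuousLinearMap.comp_apply, Submodule.subtypeL_apply]
    rw [show W.orthogonalProjectionOnto x = ⟨x, hxW⟩ from Submodule.orthogonalProjectionOnto_mem_subspace_eq_self ⟨x, hxW⟩,
      Submodule.orthogonalProjectionOnto_apply_of_mem_orthogonal hxV]
    simp
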